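/- Let α, β be complex numbers with |α| ≥ 1, and let C : ℕ × ℕ → ℂ satisfy the two-mode squeezing recurrences (for all m, n ≥ 0: √(m+1) · C (m+1, n) equals α · √n · C (m, n−1) when n ≥ 1 and 0 when n = 0; and √(n+1) · C (m, n+1) equals β · √m · C (m−1, n) when m ≥ 1 and 0 when m = 0). If Σ_{m,n} |C (m,n)|² < ∞, then C (m, n) = 0 for all m, n. Hence a nonzero normalizable simultaneous solution of (a − α b†)|ψ⟩ = 0 and (b − β a†)|ψ⟩ = 0 requires |α| < 1. -/

import Mathlib

/-- A nonzero normalizable two-mode squeezed vacuum requires `|α| < 1`: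
if `|α| ≥ 1` and `Σ_{m,n} |C (m,n)|²` converges, then `C ≡ 0`. -/
theorem two_mode_no_normalizable_solution (α β : ℂ) (hα : 1 ≤ ‖α‖)
    (C : ℕ × ℕ → ℂ)
    (ha : ∀ m n : ℕ, 1 ≤ n →
      (Real.sqrt (m + 1) : ℂ) * C (m + 1, n) = α * (Real.sqrt n : ℂ) * C (m, n - 1))
    (ha0 : ∀ m : ℕ, (Real.sqrt (m + 1) : ℂ) * C (m + 1, 0) = 0)
    (hb : ∀ m n : ℕ, 1 ≤ m →
      (Real.sqrt (n + 1) : ℂ) * C (m, n + 1) = β * (Real.sqrt m : ℂ) * C (m - 1, n))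
    (hb0 : ∀ n : ℕ, (Real.sqrt (n + 1) : ℂ) * C (0, n + 1) = 0)
    (hsum : Summable (fun p : ℕ × ℕ => ‖C p‖ ^ 2)) :
    ∀ m n : ℕ, C (m, n) = 0 := by
  have hs : ∀ k : ℕ, ((Real.sqrt (k + 1) : ℝ) : ℂ) ≠ 0 := by
    intro k
    simp only [ne_eq, Complex.ofReal_eq_zero]
    positivity
  -- entries with m > n vanish
  have hupper : ∀ n m : ℕ, n < m → C (m, n) = 0 := by
    intro n
    induction n with
    | zero =>
      intro m hm
      obtain ⟨m', rfl⟩ := Nat.exists_eq_add_of_lt hm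
      have := ha0 (0 + m')
      simpa using (mul_eq_zero.mp this).resolve_left (hs _)
    | succ n ih =>
      intro m hm
      obtain ⟨m', rfl⟩ := Nat.exists_eq_add_of_lt hm
      have h := ha (n + 1 + m') (n + 1) (by omega)
      simp only [Nat.add_sub_cancel] at h
      have h0 : C (n + 1 + m', n) = 0 := ih _ (by omega)
      rw [h0, mul_zero] at h
      exact (mul_eq_zero.mp h).resolve_left (hs _)
  -- entries with m < n vanish
  have hlower : ∀ m n : ℕ, m < n → C (m, n) = 0 := by
    intro m
    induction m with
    | zero =>
      intro n hn
      obtain ⟨n', rfl⟩ := Nat.exists_eq_add_of_lt hn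
      have := hb0 (0 + n')
      simpa using (mul_eq_zero.mp this).resolve_left (hs _)
    | succ m ih =>
      intro n hn
      obtain ⟨n', rfl⟩ := Nat.exists_eq_add_of_lt hn
      have h := hb (m + 1) (m + 1 + n') (by omega)
      simp only [Nat.add_sub_cancel] at h
      have h0 : C (m, m + 1 + n') = 0 := ih _ (by omega)
      rw [h0, mul_zero] at h
      exact (mul_eq_zero.mp h).resolve_left (hs _)
  -- diagonal entries
  have hdiag : ∀ n : ℕ, C (n, n) = α ^ n * C (0, 0) := by
    intro n
    induction n with
    | zero => simp
    | succ n ih =>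
      have h := ha n (n + 1) (by omega)
      simp only [Nat.add_sub_cancel] at h
      have h2 : C (n + 1, n + 1) = α * C (n, n) := by
        apply mul_left_cancel₀ (hs n)
        rw [h]; push_cast; ring
      rw [h2, ih, pow_succ]; ring
  -- C (0,0) = 0 from summability
  have hc0 : C (0, 0) = 0 := by
    by_contra hc
    have hsd : Summable (fun n : ℕ => ‖C (n, n)‖ ^ 2) :=
      hsum.comp_injective (fun a b h => congrArg Prod.fst h)
    have htend := hsd.tendsto_atTop_zero
    have hlb : ∀ n : ℕ, ‖C (0, 0)‖ ^ 2 ≤ ‖C (n, n)‖ ^ 2 := by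
      intro n
      rw [hdiag n, norm_mul, norm_pow, mul_pow]
      calc ‖C (0, 0)‖ ^ 2
          = 1 * ‖C (0, 0)‖ ^ 2 := by ring
        _ ≤ (‖α‖ ^ n) ^ 2 * ‖C (0, 0)‖ ^ 2 := by
            apply mul_le_mul_of_nonneg_right _ (by positivity)
            have : (1:ℝ) ≤ ‖α‖ ^ n := one_le_pow₀ hα
            nlinarith
    have hpos : 0 < ‖C (0, 0)‖ ^ 2 := by
      have := norm_pos_iff.mpr hc
      positivity
    have := le_of_tendsto_of_tendsto tendsto_const_nhds htend
      (Filter.Eventually.of_forall hlb)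
    linarith
  -- conclude
  intro m n
  rcases lt_trichotomy m n with h | rfl | h
  · exact hlower m n h
  · rw [hdiag, hc0, mul_zero]
  · exact hupper n m h
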